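/- Suppose 0 < Np < 1 and m ≥ 2. If Y_1, …, Y_N are independent random variables with P(Y_j = 1) = p and P(Y_j = 0) = 1 − p, then P(Σ_{j=1}^N Y_j ≥ m) ≤ 2(Np)^m / m!. -/

import Mathlib

open MeasureTheory ProbabilityTheory

/-- If `0 < Np < 1`, `m ≥ 2` and `Y_1, …, Y_N` are independent Bernoulli(p)
random variables, then `P(∑ Y_j ≥ m) ≤ 2 (Np)^m / m!`. -/
theorem bernoulli_sum_tail_bound
    {Ω : Type*} [MeasurableSpace Ω] (P : Measure Ω) [IsProbabilityMeasure P]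
    (N : ℕ) (p : ℝ) (hp : 0 < N * p) (hp1 : N * p < 1)
    (m : ℕ) (hm : 2 ≤ m)
    (Y : Fin N → Ω → ℝ)
    (hmeas : ∀ j, Measurable (Y j))
    (hindep : iIndepFun Y P)
    (hone : ∀ j, P {ω | Y j ω = 1} = ENNReal.ofReal p)
    (hzero : ∀ j, P {ω | Y j ω = 0} = ENNReal.ofReal (1 - p)) :
    P {ω | (m : ℝ) ≤ ∑ j, Y j ω} ≤
      ENNReal.ofReal (2 * (N * p) ^ m / (Nat.factorial m)) := by
  have hN : 0 < N := by
    by_contra h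
    push_neg at h
    interval_cases N
    simp at hp
  have hp0 : 0 < p := by
    by_contra h
    push_neg at h
    have hN' : (0:ℝ) < N := by exact_mod_cast hN
    nlinarith
  have hplt1 : p < 1 := by
    have : (1 : ℝ) ≤ N := by exact_mod_cast hN
    nlinarith
  -- the set where Y j is 0/1-valued
  set G : Set Ω := ⋂ j, ({ω | Y j ω = 1} ∪ {ω | Y j ω = 0}) with hG
  have hGc : P Gᶜ = 0 := by
    rw [hG, Set.compl_iInter]
    refine measure_iUnion_null fun j => ?_
    have hmeas1 : MeasurableSet {ω | Y j ω = 1} := hmeas j (measurableSet_singleton 1)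
    have hmeas0 : MeasurableSet {ω | Y j ω = 0} := hmeas j (measurableSet_singleton 0)
    have hdisj : Disjoint {ω | Y j ω = 1} {ω | Y j ω = 0} := by
      rw [Set.disjoint_left]
      intro ω h1 h0
      simp only [Set.mem_setOf_eq] at h1 h0
      rw [h1] at h0; norm_num at h0
    have : P ({ω | Y j ω = 1} ∪ {ω | Y j ω = 0}) = 1 := by
      rw [measure_union hdisj hmeas0, hone j, hzero j,
        ← ENNReal.ofReal_add hp0.le (by linarith)]
      norm_num
    rw [measure_compl (hmeas1.union hmeas0) (by simp), this]
    simp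
  -- union bound inclusion
  have hsub : {ω | (m : ℝ) ≤ ∑ j, Y j ω} ∩ G ⊆
      ⋃ S ∈ Finset.univ.powersetCard m, ⋂ j ∈ S, {ω | Y j ω = 1} := by
    rintro ω ⟨hωm, hωG⟩
    simp only [hG, Set.mem_iInter, Set.mem_union, Set.mem_setOf_eq] at hωG
    set T : Finset (Fin N) := Finset.univ.filter (fun j => Y j ω = 1) with hT
    have hsum : ∑ j, Y j ω = T.card := by
      rw [← Finset.sum_filter_add_sum_filter_not Finset.univ (fun j => Y j ω = 1)]
      have h1 : ∑ j ∈ T, Y j ω = T.card := by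
        rw [Finset.sum_congr rfl (fun j hj => (Finset.mem_filter.mp hj).2)]
        simp; rfl
      have h2 : ∑ j ∈ Finset.univ.filter (fun j => ¬ Y j ω = 1), Y j ω = 0 := by
        refine Finset.sum_eq_zero fun j hj => ?_
        rcases hωG j with h | h
        · exact absurd h (Finset.mem_filter.mp hj).2
        · exact h
      rw [h1, h2, add_zero]
    have hmT : m ≤ T.card := by
      simp only [Set.mem_setOf_eq, hsum] at hωm
      exact_mod_cast hωm
    obtain ⟨S, hST, hScard⟩ := Finset.exists_subset_card_eq hmT
    simp only [Set.mem_iUnion, Set.mem_iInter, Set.mem_setOf_eq]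
    exact ⟨S, Finset.mem_powersetCard.mpr ⟨Finset.subset_univ S, hScard⟩,
      fun j hj => (Finset.mem_filter.mp (hST hj)).2⟩
  have hmain : P {ω | (m : ℝ) ≤ ∑ j, Y j ω} ≤
      (N.choose m : ENNReal) * ENNReal.ofReal p ^ m := by
    calc P {ω | (m : ℝ) ≤ ∑ j, Y j ω}
        ≤ P (({ω | (m : ℝ) ≤ ∑ j, Y j ω} ∩ G) ∪ Gᶜ) := by
          refine measure_mono fun ω hω => ?_
          by_cases h : ω ∈ G
          · exact Or.inl ⟨hω, h⟩
          · exact Or.inr h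
      _ ≤ P ({ω | (m : ℝ) ≤ ∑ j, Y j ω} ∩ G) + P Gᶜ := measure_union_le _ _
      _ = P ({ω | (m : ℝ) ≤ ∑ j, Y j ω} ∩ G) := by rw [hGc, add_zero]
      _ ≤ P (⋃ S ∈ Finset.univ.powersetCard m, ⋂ j ∈ S, {ω | Y j ω = 1}) :=
          measure_mono hsub
      _ ≤ ∑ S ∈ Finset.univ.powersetCard m, P (⋂ j ∈ S, {ω | Y j ω = 1}) :=
          measure_biUnion_finset_le _ _
      _ = ∑ S ∈ Finset.univ.powersetCard m, ENNReal.ofReal p ^ m := by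
          refine Finset.sum_congr rfl fun S hS => ?_
          have hcard := (Finset.mem_powersetCard.mp hS).2
          have : P (⋂ j ∈ S, {ω | Y j ω = 1}) = ∏ j ∈ S, P {ω | Y j ω = 1} := by
            refine hindep.meas_biInter fun j _ => ?_
            exact ⟨{1}, measurableSet_singleton 1, rfl⟩
          rw [this]
          simp_rw [hone]
          rw [Finset.prod_const, hcard]
      _ = (N.choose m : ENNReal) * ENNReal.ofReal p ^ m := by
          rw [Finset.sum_const, nsmul_eq_mul]
          congr 1
          rw [Finset.card_powersetCard, Finset.card_univ, Fintype.card_fin]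
  refine hmain.trans ?_
  have hcast : (N.choose m : ENNReal) * ENNReal.ofReal p ^ m
      = ENNReal.ofReal (N.choose m * p ^ m) := by
    rw [ENNReal.ofReal_mul (by positivity), ← ENNReal.ofReal_pow hp0.le,
      ENNReal.ofReal_natCast]
  rw [hcast]
  apply ENNReal.ofReal_le_ofReal
  have hchoose : (N.choose m : ℝ) ≤ (N : ℝ) ^ m / m.factorial := by
    rw [le_div_iff₀ (by positivity)]
    have := Nat.descFactorial_le_pow N m
    have h2 : N.descFactorial m = m.factorial * N.choose m :=
      Nat.descFactorial_eq_factorial_mul_choose N m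
    calc (N.choose m : ℝ) * m.factorial = (N.descFactorial m : ℝ) := by
          rw [h2]; push_cast; ring
      _ ≤ (N : ℝ) ^ m := by exact_mod_cast this
  have hpm : (0 : ℝ) < p ^ m := by positivity
  calc (N.choose m : ℝ) * p ^ m ≤ ((N : ℝ) ^ m / m.factorial) * p ^ m :=
        mul_le_mul_of_nonneg_right hchoose hpm.le
    _ = (N * p) ^ m / m.factorial := by ring
    _ ≤ 2 * (N * p) ^ m / m.factorial := by
        have : (0 : ℝ) < (N * p) ^ m := by positivity
        have hf : (0 : ℝ) < m.factorial := by positivity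
        rw [div_le_div_iff₀ hf hf]
        nlinarith
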